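/- arXiv:2507.08261 — 3 statements merged into one kernel-verified Lean document; each statement's English description precedes it below -/
import Mathlib

section
/- Let p ≥ 2, α > 0, and let X₁, …, X_p be independent real random variables with X_i ~ Gamma(α, β_i) (shape α, scale β_i > 0). Define the naive estimator β̂_i⁰ = X_i/(α+1) and, for a constant c, the shrinkage estimator β̂_i^JS = β̂_i⁰ + cV where V = (∏_{j=1}^p X_j)^{1/p}. If c ∈ [0, 2(p−1)/((α+1)(αp+1))], then for every β ∈ ℝ₊^p the shrinkage estimator dominates the naive estimator in total mean squared risk: E[Σ_{i=1}^p (β̂_i^JS − β_i)²] ≤ E[Σ_{i=1}^p (β̂_i⁰ − β_i)²]. -/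
open MeasureTheory ProbabilityTheory Real Set
open scoped ENNReal NNReal

lemma myGamma_le (x s : ℝ) (hx : 0 < x) (hs0 : 0 ≤ s) (hs1 : s ≤ 1) :
    Gamma (x + s) ≤ Gamma x * x ^ s := by
  rcases eq_or_lt_of_le hs0 with h | hs0'
  · simp [← h]
  have hx1 : (x + 1 : ℝ) ∈ Ioi (0:ℝ) := by simp; linarith
  have key := convexOn_log_Gamma.2 (mem_Ioi.2 hx) hx1 (sub_nonneg.2 hs1) hs0 (by ring)
  simp only [smul_eq_mul, Function.comp_apply] at key
  have harg : (1 - s) * x + s * (x + 1) = x + s := by ring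
  rw [harg] at key
  have hG : 0 < Gamma x := Gamma_pos_of_pos hx
  have hGs : 0 < Gamma (x + s) := Gamma_pos_of_pos (by linarith)
  have hlog1 : Real.log (Gamma (x + 1)) = Real.log x + Real.log (Gamma x) := by
    rw [Gamma_add_one hx.ne', Real.log_mul hx.ne' hG.ne']
  rw [hlog1] at key
  have key2 : Real.log (Gamma (x + s)) ≤ Real.log (Gamma x * x ^ s) := by
    rw [Real.log_mul hG.ne' (rpow_pos_of_pos hx s).ne', Real.log_rpow hx]
    nlinarith [key]
  calc Gamma (x + s) = Real.exp (Real.log (Gamma (x + s))) := (Real.exp_log hGs).symm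
    _ ≤ Real.exp (Real.log (Gamma x * x ^ s)) := Real.exp_le_exp.2 key2
    _ = Gamma x * x ^ s := Real.exp_log (by positivity)

lemma myIntOn (t r : ℝ) (ht : 0 < t) (hr : 0 < r) :
    IntegrableOn (fun x : ℝ => x ^ (t - 1) * Real.exp (-(r * x))) (Ioi 0) := by
  have h1 : IntegrableOn (fun x : ℝ => Real.exp (-(r * x)) * (r * x) ^ (t - 1)) (Ioi 0) := by
    have := (integrableOn_Ioi_comp_mul_left_iff
      (fun x : ℝ => Real.exp (-x) * x ^ (t - 1)) 0 hr).2
      (by rw [mul_zero]; exact Real.GammaIntegral_convergent ht)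
    simpa using this
  have h2 : IntegrableOn (fun x : ℝ => r ^ (1 - t) * (Real.exp (-(r * x)) * (r * x) ^ (t - 1))) (Ioi 0) :=
    h1.const_mul _
  refine h2.congr_fun (fun x hx => ?_) measurableSet_Ioi
  have hx0 : (0:ℝ) < x := hx
  beta_reduce
  rw [Real.mul_rpow hr.le hx0.le]
  rw [show r ^ (1-t) * (Real.exp (-(r * x)) * (r ^ (t-1) * x ^ (t-1)))
      = (r ^ (1-t) * r ^ (t-1)) * (x ^ (t-1) * Real.exp (-(r*x))) by ring,
    ← Real.rpow_add hr]
  norm_num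

lemma myGammaMoment (a r s : ℝ) (ha : 0 < a) (hr : 0 < r) (hs : 0 < a + s) :
    Integrable (fun x : ℝ => x ^ s) (gammaMeasure a r) ∧
      ∫ x, x ^ s ∂(gammaMeasure a r) = (Gamma (a + s) / Gamma a) * (1 / r) ^ s := by
  set h : ℝ → ℝ := fun x => gammaPDFReal a r x * x ^ s with hh
  have hdens : gammaMeasure a r
      = volume.withDensity (fun x => ((gammaPDFReal a r x).toNNReal : ℝ≥0∞)) := rfl
  have hmeasf : Measurable fun x => (gammaPDFReal a r x).toNNReal :=
    (measurable_gammaPDFReal a r).real_toNNReal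
  have hsmul : ∀ x : ℝ, (gammaPDFReal a r x).toNNReal • (x ^ s) = h x := fun x => by
    simp [hh, NNReal.smul_def, Real.coe_toNNReal _ (gammaPDFReal_nonneg ha hr x)]
  have hae : h =ᵐ[volume] (Ioi 0).indicator h := by
    have hzero : ∀ᵐ x : ℝ ∂volume, x ≠ (0:ℝ) := by
      rw [ae_iff]
      simp only [ne_eq, not_not, Set.setOf_eq_eq_singleton]
      exact Real.volume_singleton
    filter_upwards [hzero] with x hx
    by_cases hx' : x ∈ Ioi 0
    · rw [Set.indicator_of_mem hx']
    · rw [Set.indicator_of_notMem hx']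
      have hneg : x < 0 := lt_of_le_of_ne (not_lt.1 hx') hx
      simp [hh, gammaPDFReal, not_le.2 hneg]
  have honIoi : EqOn h
      (fun x : ℝ => (r ^ a / Gamma a) * (x ^ (a + s - 1) * Real.exp (-(r * x)))) (Ioi 0) := by
    intro x hx
    have hx0 : (0:ℝ) < x := hx
    simp only [hh, gammaPDFReal, if_pos hx0.le]
    rw [show a + s - 1 = (a - 1) + s by ring, Real.rpow_add hx0]
    ring
  have hIntOn : IntegrableOn h (Ioi 0) := by
    have := (myIntOn (a + s) r hs hr).const_mul (r ^ a / Gamma a)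
    exact (IntegrableOn.congr_fun this (fun x hx => (honIoi hx).symm) measurableSet_Ioi)
  have hint : Integrable h volume := by
    refine (Integrable.congr ?_ hae.symm)
    exact (integrable_indicator_iff measurableSet_Ioi).2 hIntOn
  constructor
  · rw [hdens, integrable_withDensity_iff_integrable_smul hmeasf]
    exact hint.congr (Filter.Eventually.of_forall fun x => (hsmul x).symm) |>.congr
      (Filter.Eventually.of_forall fun x => rfl)
  · rw [hdens, integral_withDensity_eq_integral_smul hmeasf]
    calc ∫ x, (gammaPDFReal a r x).toNNReal • (x ^ s) ∂volume
        = ∫ x, h x ∂volume := by simp_rw [hsmul]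
      _ = ∫ x, (Ioi 0).indicator h x ∂volume := integral_congr_ae hae
      _ = ∫ x in Ioi 0, h x ∂volume := integral_indicator measurableSet_Ioi
      _ = ∫ x in Ioi 0, (r ^ a / Gamma a) * (x ^ (a + s - 1) * Real.exp (-(r * x))) ∂volume :=
          setIntegral_congr_fun measurableSet_Ioi honIoi
      _ = (r ^ a / Gamma a) * ∫ x in Ioi 0, x ^ (a + s - 1) * Real.exp (-(r * x)) ∂volume := by
          rw [integral_const_mul]
      _ = (r ^ a / Gamma a) * ((1 / r) ^ (a + s) * Gamma (a + s)) := by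
          rw [integral_rpow_mul_exp_neg_mul_Ioi hs hr]
      _ = (Gamma (a + s) / Gamma a) * (1 / r) ^ s := by
          rw [Real.rpow_add (by positivity : (0:ℝ) < 1 / r), div_rpow zero_le_one hr.le,
            one_rpow]
          have hra : (r:ℝ) ^ a ≠ 0 := (rpow_pos_of_pos hr a).ne'
          have hga : Gamma a ≠ 0 := (Gamma_pos_of_pos ha).ne'
          field_simp

lemma myProd {Ω : Type*} [MeasureSpace Ω] [IsProbabilityMeasure (ℙ : Measure Ω)]
    {ι : Type*} {Y : ι → Ω → ℝ} (h : iIndepFun Y ℙ)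
    (hm : ∀ i, Measurable (Y i)) (hint : ∀ i, Integrable (Y i) ℙ) (s : Finset ι) :
    Integrable (fun ω => ∏ i ∈ s, Y i ω) ℙ ∧
      (∫ ω, ∏ i ∈ s, Y i ω ∂ℙ) = ∏ i ∈ s, ∫ ω, Y i ω ∂ℙ := by
  classical
  induction' s using Finset.induction_on with i s hi ih
  · simp
  · have hfun : ∀ t : Finset ι, (fun ω => ∏ j ∈ t, Y j ω) = ∏ j ∈ t, Y j := by
      intro t; funext ω; rw [Finset.prod_apply]
    have hIndep : IndepFun (Y i) (∏ j ∈ s, Y j) ℙ :=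
      (h.indepFun_finsetProd_of_notMem hm hi).symm
    have hintp : Integrable (∏ j ∈ s, Y j) ℙ := by rw [← hfun]; exact ih.1
    have hmul : Integrable (Y i * ∏ j ∈ s, Y j) ℙ :=
      hIndep.integrable_mul (hint i) hintp
    constructor
    · refine hmul.congr (Filter.Eventually.of_forall fun ω => ?_)
      simp [Finset.prod_insert hi, Finset.prod_apply]
    · have hval := hIndep.integral_mul_eq_mul_integral (hint i).aestronglyMeasurable hintp.aestronglyMeasurable
      have e1 : (fun ω => ∏ j ∈ insert i s, Y j ω) = Y i * ∏ j ∈ s, Y j := by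
        funext ω; simp [Finset.prod_insert hi, Finset.prod_apply]
      rw [e1, hval, Finset.prod_insert hi, ← hfun s, ih.2]

/-- Let `p ≥ 2`, `α > 0`, and `X₁, …, X_p` independent with
`X_i ~ Gamma(α, β_i)` (shape `α`, scale `β_i`, i.e. rate `1/β_i`). With
`β̂_i⁰ = X_i/(α+1)` and `β̂_i^JS = β̂_i⁰ + cV`, `V = (∏ X_j)^{1/p}`, if
`c ∈ [0, 2(p−1)/((α+1)(αp+1))]` then the shrinkage estimator dominates the naive
estimator in total mean squared risk. -/
theorem stmt_1 {Ω : Type*} [MeasureSpace Ω] [IsProbabilityMeasure (ℙ : Measure Ω)]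
    (p : ℕ) (hp : 2 ≤ p) (α : ℝ) (hα : 0 < α) (β : Fin p → ℝ) (hβ : ∀ i, 0 < β i)
    (X : Fin p → Ω → ℝ) (hX : ∀ i, Measurable (X i))
    (hindep : iIndepFun X ℙ)
    (hlaw : ∀ i, Measure.map (X i) ℙ = gammaMeasure α (1 / β i))
    (c : ℝ) (hc : c ∈ Set.Icc 0 (2 * ((p : ℝ) - 1) / ((α + 1) * (α * p + 1)))) :
    ∫ ω, ∑ i, (X i ω / (α + 1) + c * (∏ j, X j ω) ^ ((1 : ℝ) / p) - β i) ^ 2 ∂ℙ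
      ≤ ∫ ω, ∑ i, (X i ω / (α + 1) - β i) ^ 2 ∂ℙ := by
  obtain ⟨hc0, hc1⟩ := hc
  have hp2 : (2:ℝ) ≤ (p:ℝ) := by exact_mod_cast hp
  have hp0 : (0:ℝ) < (p:ℝ) := by linarith
  have hα1 : (0:ℝ) < α + 1 := by linarith
  set q : ℝ := (1:ℝ) / (p:ℝ) with hqdef
  have hq : 0 < q := by positivity
  have hq1 : q ≤ 1 := by rw [hqdef]; rw [div_le_one hp0]; linarith
  have hqp : q * (p:ℝ) = 1 := by rw [hqdef]; field_simp
  -- moments of the individual variables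
  have mom : ∀ (i : Fin p) (s : ℝ), 0 < s →
      Integrable (fun ω => X i ω ^ s) ℙ ∧
        ∫ ω, X i ω ^ s ∂ℙ = β i ^ s * (Gamma (α + s) / Gamma α) := by
    intro i s hs
    have hβi := hβ i
    have hr : 0 < 1 / β i := by positivity
    have hmono := myGammaMoment α (1 / β i) s hα hr (by linarith)
    have hmg : Measurable fun x : ℝ => x ^ s := (continuous_rpow_const hs.le).measurable
    constructor
    · have h1 := hmono.1
      rw [← hlaw i] at h1
      exact (integrable_map_measure hmg.aestronglyMeasurable (hX i).aemeasurable).1 h1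
    · have h2 := hmono.2
      rw [← hlaw i, integral_map (hX i).aemeasurable hmg.aestronglyMeasurable] at h2
      rw [h2, one_div_one_div]
      ring
  -- a.e. positivity
  have hpos : ∀ i, ∀ᵐ ω ∂ℙ, 0 < X i ω := by
    intro i
    have hmap : ℙ (X i ⁻¹' (Iic 0)) = 0 := by
      have h1 := Measure.map_apply (μ := ℙ) (hX i) (measurableSet_Iic (a := (0:ℝ)))
      rw [hlaw i] at h1
      rw [← h1, gammaMeasure, withDensity_apply _ measurableSet_Iic,
        lintegral_Iic_eq_lintegral_Iio_add_Icc _ le_rfl,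
        lintegral_gammaPDF_of_nonpos le_rfl, Set.Icc_self, zero_add]
      exact setLIntegral_measure_zero _ _ Real.volume_singleton
    have hset : {ω | ¬ 0 < X i ω} = X i ⁻¹' (Iic 0) := by ext ω; simp [not_lt]
    rw [ae_iff, hset]
    exact hmap
  have hall : ∀ᵐ ω ∂ℙ, ∀ i, 0 < X i ω := ae_all_iff.2 hpos
  -- product moments
  have key : ∀ (e : Fin p → ℝ), (∀ j, 0 < e j) →
      Integrable (fun ω => ∏ j, X j ω ^ e j) ℙ ∧
        ∫ ω, ∏ j, X j ω ^ e j ∂ℙ = ∏ j, (β j ^ e j * (Gamma (α + e j) / Gamma α)) := by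
    intro e he
    have hcomp : iIndepFun
        (fun j => (fun x : ℝ => x ^ e j) ∘ X j) ℙ :=
      hindep.comp _ (fun j => (continuous_rpow_const (he j).le).measurable)
    obtain ⟨h1, h2⟩ := myProd hcomp
      (fun j => ((continuous_rpow_const (he j).le).measurable).comp (hX j))
      (fun j => (mom j (e j) (he j)).1) Finset.univ
    simp only [Function.comp] at h1 h2
    refine ⟨h1, ?_⟩
    rw [h2]
    exact Finset.prod_congr rfl fun j _ => (mom j (e j) (he j)).2
  -- a.e. identifications of V, V^2, V * X i with products of powers
  have hVae : (fun ω => (∏ j, X j ω) ^ q) =ᵐ[ℙ] (fun ω => ∏ j, X j ω ^ q) :=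
    hall.mono fun ω hω =>
      (Real.finset_prod_rpow Finset.univ _ (fun j _ => (hω j).le) q).symm
  have hV2ae : (fun ω => ((∏ j, X j ω) ^ q) ^ 2) =ᵐ[ℙ] (fun ω => ∏ j, X j ω ^ (q * 2)) := by
    filter_upwards [hall] with ω hω
    have hprod : (0:ℝ) < ∏ j, X j ω := Finset.prod_pos fun j _ => hω j
    have h2 : ((∏ j, X j ω) ^ q) ^ 2 = (∏ j, X j ω) ^ (q * 2) := by
      rw [← Real.rpow_natCast ((∏ j, X j ω) ^ q) 2, ← Real.rpow_mul hprod.le]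
      norm_num
    rw [h2, ← Real.finset_prod_rpow Finset.univ _ (fun j _ => (hω j).le)]
  have hVXae : ∀ i : Fin p, (fun ω => (∏ j, X j ω) ^ q * X i ω)
      =ᵐ[ℙ] (fun ω => ∏ j, X j ω ^ (q + if j = i then (1:ℝ) else 0)) := by
    intro i
    filter_upwards [hall] with ω hω
    have h1 : ∀ j : Fin p, X j ω ^ (q + if j = i then (1:ℝ) else 0)
        = X j ω ^ q * (if j = i then X j ω else 1) := by
      intro j
      rw [Real.rpow_add (hω j)]
      congr 1
      split_ifs
      · exact Real.rpow_one _
      · exact Real.rpow_zero _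
    have h2 : ∏ j, X j ω ^ (q + if j = i then (1:ℝ) else 0)
        = (∏ j, X j ω) ^ q * X i ω := by
      rw [Finset.prod_congr rfl (fun j _ => h1 j), Finset.prod_mul_distrib,
        Finset.prod_ite_eq' Finset.univ i (fun j => X j ω),
        Real.finset_prod_rpow Finset.univ _ (fun j _ => (hω j).le)]
      simp
    exact h2.symm
  -- named constants
  set Gq : ℝ := Gamma (α + q) / Gamma α with hGqdef
  set G2 : ℝ := Gamma (α + q * 2) / Gamma α with hG2def
  set K : ℝ := ∏ j, (β j ^ q * Gq) with hKdef
  set K2 : ℝ := ∏ j, (β j ^ (q * 2) * G2) with hK2def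
  set S : ℝ := ∑ j, β j with hSdef
  have hΓα : 0 < Gamma α := Gamma_pos_of_pos hα
  have hGq_pos : 0 < Gq := div_pos (Gamma_pos_of_pos (by linarith)) hΓα
  have hG2_pos : 0 < G2 := div_pos (Gamma_pos_of_pos (by nlinarith)) hΓα
  -- value of the mixed product
  have hmixed : ∀ i : Fin p,
      (∏ j, (β j ^ (q + if j = i then (1:ℝ) else 0)
        * (Gamma (α + (q + if j = i then (1:ℝ) else 0)) / Gamma α)))
      = K * (β i * (α + q)) := by
    intro i
    have hfac : ∀ j : Fin p, β j ^ (q + if j = i then (1:ℝ) else 0)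
        * (Gamma (α + (q + if j = i then (1:ℝ) else 0)) / Gamma α)
        = (β j ^ q * Gq) * (if j = i then β j * (α + q) else 1) := by
      intro j
      split_ifs with h
      · rw [Real.rpow_add (hβ j), Real.rpow_one,
          show α + (q + 1) = (α + q) + 1 by ring,
          Gamma_add_one (by linarith : α + q ≠ 0)]
        rw [hGqdef]; field_simp
      · rw [add_zero, mul_one, hGqdef]
    rw [Finset.prod_congr rfl (fun j _ => hfac j), Finset.prod_mul_distrib,
      Finset.prod_ite_eq' Finset.univ i (fun j => β j * (α + q)), hKdef]
    simp
  -- integrability and values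
  have keyV := key (fun _ => q) (fun _ => hq)
  have keyV2 := key (fun _ => q * 2) (fun _ => by positivity)
  have keyVX : ∀ i : Fin p, Integrable
        (fun ω => ∏ j, X j ω ^ (q + if j = i then (1:ℝ) else 0)) ℙ ∧
      ∫ ω, ∏ j, X j ω ^ (q + if j = i then (1:ℝ) else 0) ∂ℙ
        = K * (β i * (α + q)) := by
    intro i
    have hepos : ∀ j : Fin p, 0 < q + if j = i then (1:ℝ) else 0 := by
      intro j
      have : (0:ℝ) ≤ if j = i then (1:ℝ) else 0 := by split_ifs <;> norm_num
      linarith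
    obtain ⟨h1, h2⟩ := key _ hepos
    exact ⟨h1, by rw [h2, hmixed i]⟩
  have intV : Integrable (fun ω => (∏ j, X j ω) ^ q) ℙ := keyV.1.congr hVae.symm
  have valV : ∫ ω, (∏ j, X j ω) ^ q ∂ℙ = K := by
    rw [integral_congr_ae hVae, keyV.2, hKdef]
  have intV2 : Integrable (fun ω => ((∏ j, X j ω) ^ q) ^ 2) ℙ := keyV2.1.congr hV2ae.symm
  have valV2 : ∫ ω, ((∏ j, X j ω) ^ q) ^ 2 ∂ℙ = K2 := by
    rw [integral_congr_ae hV2ae, keyV2.2, hK2def]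
  have intVX : ∀ i, Integrable (fun ω => (∏ j, X j ω) ^ q * X i ω) ℙ :=
    fun i => (keyVX i).1.congr (hVXae i).symm
  have valVX : ∀ i, ∫ ω, (∏ j, X j ω) ^ q * X i ω ∂ℙ = K * (β i * (α + q)) :=
    fun i => by rw [integral_congr_ae (hVXae i), (keyVX i).2]
  have intX : ∀ i, Integrable (X i) ℙ := fun i =>
    ((mom i 1 one_pos).1).congr (Filter.Eventually.of_forall fun ω => Real.rpow_one _)
  have intX2 : ∀ i, Integrable (fun ω => X i ω ^ 2) ℙ := by
    intro i
    refine ((mom i 2 two_pos).1).congr ((hpos i).mono fun ω hω => ?_)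
    show X i ω ^ (2:ℝ) = X i ω ^ 2
    rw [← Real.rpow_natCast (X i ω) 2]
    norm_num
  -- integrability of the naive risk integrand
  have intRHS : Integrable (fun ω => ∑ i, (X i ω / (α + 1) - β i) ^ 2) ℙ := by
    refine integrable_finset_sum _ fun i _ => ?_
    have h1 : Integrable (fun ω => (1/(α+1))^2 * X i ω ^ 2
        - (2 * β i / (α+1)) * X i ω + β i ^ 2) ℙ :=
      (((intX2 i).const_mul _).sub ((intX i).const_mul _)).add (integrable_const _)
    exact h1.congr (Filter.Eventually.of_forall fun ω => by ring)
  -- the correction terms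
  have intD : ∀ i : Fin p, Integrable (fun ω =>
      2 * c * (∏ j, X j ω) ^ q * (X i ω / (α + 1) - β i)
        + c ^ 2 * ((∏ j, X j ω) ^ q) ^ 2) ℙ := by
    intro i
    have h1 : Integrable (fun ω => (2 * c / (α+1)) * ((∏ j, X j ω) ^ q * X i ω)
        - (2 * c * β i) * (∏ j, X j ω) ^ q
        + c ^ 2 * ((∏ j, X j ω) ^ q) ^ 2) ℙ :=
      (((intVX i).const_mul _).sub (intV.const_mul _)).add (intV2.const_mul _)
    exact h1.congr (Filter.Eventually.of_forall fun ω => by ring)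
  have valD : ∀ i : Fin p, ∫ ω, (2 * c * (∏ j, X j ω) ^ q * (X i ω / (α + 1) - β i)
        + c ^ 2 * ((∏ j, X j ω) ^ q) ^ 2) ∂ℙ
      = (2 * c / (α+1)) * (K * (β i * (α + q))) - (2 * c * β i) * K + c ^ 2 * K2 := by
    intro i
    have e1 : (fun ω => 2 * c * (∏ j, X j ω) ^ q * (X i ω / (α + 1) - β i)
        + c ^ 2 * ((∏ j, X j ω) ^ q) ^ 2)
        = fun ω => ((2 * c / (α+1)) * ((∏ j, X j ω) ^ q * X i ω)
          - (2 * c * β i) * (∏ j, X j ω) ^ q)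
          + c ^ 2 * ((∏ j, X j ω) ^ q) ^ 2 := funext fun ω => by ring
    have hsub : Integrable (fun ω => 2 * c / (α+1) * ((∏ j, X j ω) ^ q * X i ω)
        - 2 * c * β i * (∏ j, X j ω) ^ q) ℙ :=
      ((intVX i).const_mul (2 * c / (α+1))).sub (intV.const_mul (2 * c * β i))
    rw [e1, integral_add hsub (intV2.const_mul (c ^ 2)),
      integral_sub ((intVX i).const_mul (2 * c / (α+1))) (intV.const_mul (2 * c * β i)),
      integral_const_mul, integral_const_mul, integral_const_mul, valVX i, valV, valV2]
  -- pointwise split of the risk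
  have hsplit : ∀ ω, ∑ i, (X i ω / (α + 1) + c * (∏ j, X j ω) ^ q - β i) ^ 2
      = (∑ i, (X i ω / (α + 1) - β i) ^ 2)
        + ∑ i, (2 * c * (∏ j, X j ω) ^ q * (X i ω / (α + 1) - β i)
            + c ^ 2 * ((∏ j, X j ω) ^ q) ^ 2) := by
    intro ω
    rw [← Finset.sum_add_distrib]
    exact Finset.sum_congr rfl fun i _ => by ring
  have intDsum : Integrable (fun ω => ∑ i,
      (2 * c * (∏ j, X j ω) ^ q * (X i ω / (α + 1) - β i)
        + c ^ 2 * ((∏ j, X j ω) ^ q) ^ 2)) ℙ :=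
    integrable_finset_sum _ fun i _ => intD i
  have hDval : ∫ ω, ∑ i, (2 * c * (∏ j, X j ω) ^ q * (X i ω / (α + 1) - β i)
        + c ^ 2 * ((∏ j, X j ω) ^ q) ^ 2) ∂ℙ
      = ∑ i, ((2 * c / (α+1)) * (K * (β i * (α + q))) - (2 * c * β i) * K + c ^ 2 * K2) := by
    rw [integral_finset_sum _ (fun i _ => intD i)]
    exact Finset.sum_congr rfl fun i _ => valD i
  have hsum : ∑ i, ((2 * c / (α+1)) * (K * (β i * (α + q))) - (2 * c * β i) * K + c ^ 2 * K2)
      = (2 * c * K * (α + q) / (α + 1) - 2 * c * K) * S + (p:ℝ) * (c ^ 2 * K2) := by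
    rw [Finset.sum_congr rfl (fun i (_ : i ∈ Finset.univ) =>
      show (2 * c / (α+1)) * (K * (β i * (α + q))) - (2 * c * β i) * K + c ^ 2 * K2
        = (2 * c * K * (α + q) / (α + 1) - 2 * c * K) * β i + c ^ 2 * K2 from by ring),
      Finset.sum_add_distrib, ← Finset.mul_sum, Finset.sum_const, Finset.card_univ,
      Fintype.card_fin, nsmul_eq_mul, ← hSdef]
  -- the quantitative bound
  set b : ℝ := ∏ j, β j ^ q with hbdef
  have hb_pos : 0 < b := Finset.prod_pos fun j _ => rpow_pos_of_pos (hβ j) q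
  have hK : K = b * Gq ^ p := by
    rw [hKdef, Finset.prod_mul_distrib, Finset.prod_const, Finset.card_univ, Fintype.card_fin]
  have hK2 : K2 = b ^ 2 * G2 ^ p := by
    rw [hK2def, Finset.prod_mul_distrib, Finset.prod_const, Finset.card_univ, Fintype.card_fin]
    congr 1
    rw [hbdef, ← Finset.prod_pow]
    exact Finset.prod_congr rfl fun j _ => by
      rw [Real.rpow_mul (hβ j).le, show (2:ℝ) = ((2:ℕ):ℝ) by norm_num, Real.rpow_natCast]
  have hAMGM : b ≤ q * S := by
    have h := Real.geom_mean_le_arith_mean_weighted Finset.univ (fun _ => q) β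
      (fun _ _ => hq.le)
      (by rw [Finset.sum_const, Finset.card_univ, Fintype.card_fin, nsmul_eq_mul, hqdef]
          field_simp)
      (fun j _ => (hβ j).le)
    rw [← Finset.mul_sum] at h
    rw [hbdef, hSdef]
    exact h
  have hx : 0 < α + q := by linarith
  have hGamma_ineq : (p:ℝ) * G2 ^ p ≤ (α * p + 1) * Gq ^ p := by
    have h1 : Gamma (α + q * 2) ≤ Gamma (α + q) * (α + q) ^ q := by
      have h := myGamma_le (α + q) q hx hq.le hq1
      rw [show α + q * 2 = (α + q) + q by ring]
      exact h
    have h2 : G2 ≤ Gq * (α + q) ^ q := by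
      rw [hG2def, hGqdef,
        show Gamma (α + q) / Gamma α * (α + q) ^ q
          = Gamma (α + q) * (α + q) ^ q / Gamma α from by ring]
      exact (div_le_div_iff_of_pos_right hΓα).2 h1
    have h3 : G2 ^ p ≤ Gq ^ p * (α + q) := by
      have h4 : G2 ^ p ≤ (Gq * (α + q) ^ q) ^ p := pow_le_pow_left₀ hG2_pos.le h2 p
      rw [mul_pow, ← Real.rpow_natCast ((α + q) ^ q) p, ← Real.rpow_mul hx.le, hqp,
        Real.rpow_one] at h4
      exact h4
    calc (p:ℝ) * G2 ^ p ≤ (p:ℝ) * (Gq ^ p * (α + q)) :=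
          mul_le_mul_of_nonneg_left h3 hp0.le
      _ = (α * p + q * p) * Gq ^ p := by ring
      _ = (α * p + 1) * Gq ^ p := by rw [hqp]
  have hcc : c * (α * p + 1) ≤ 2 * ((p:ℝ) - 1) / (α + 1) := by
    have hαp1 : (0:ℝ) < α * p + 1 := by positivity
    calc c * (α * p + 1)
        ≤ 2 * ((p:ℝ) - 1) / ((α + 1) * (α * p + 1)) * (α * p + 1) :=
          mul_le_mul_of_nonneg_right hc1 hαp1.le
      _ = 2 * ((p:ℝ) - 1) / (α + 1) := by field_simp
  have hpm1 : (0:ℝ) ≤ (p:ℝ) - 1 := by linarith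
  have hq1' : 1 - q = ((p:ℝ) - 1) * q := by rw [hqdef]; field_simp
  have hSnn : 0 ≤ S := by rw [hSdef]; exact Finset.sum_nonneg fun j _ => (hβ j).le
  have h2n : (0:ℝ) ≤ 2 * ((p:ℝ) - 1) / (α + 1) := div_nonneg (by linarith) hα1.le
  have main : (p:ℝ) * (c ^ 2 * K2) ≤ 2 * c * K * (1 - q) / (α + 1) * S := by
    calc (p:ℝ) * (c ^ 2 * K2) = c ^ 2 * b ^ 2 * ((p:ℝ) * G2 ^ p) := by rw [hK2]; ring
      _ ≤ c ^ 2 * b ^ 2 * ((α * p + 1) * Gq ^ p) :=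
          mul_le_mul_of_nonneg_left hGamma_ineq (by positivity)
      _ = (c * (α * p + 1)) * (c * b * b * Gq ^ p) := by ring
      _ ≤ (2 * ((p:ℝ) - 1) / (α + 1)) * (c * b * b * Gq ^ p) :=
          mul_le_mul_of_nonneg_right hcc
            (mul_nonneg (mul_nonneg (mul_nonneg hc0 hb_pos.le) hb_pos.le)
              (pow_nonneg hGq_pos.le p))
      _ = (2 * ((p:ℝ) - 1) / (α + 1) * c * b * Gq ^ p) * b := by ring
      _ ≤ (2 * ((p:ℝ) - 1) / (α + 1) * c * b * Gq ^ p) * (q * S) :=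
          mul_le_mul_of_nonneg_left hAMGM
            (mul_nonneg (mul_nonneg (mul_nonneg h2n hc0) hb_pos.le)
              (pow_nonneg hGq_pos.le p))
      _ = 2 * c * (b * Gq ^ p) * (1 - q) / (α + 1) * S := by rw [hq1']; ring
      _ = 2 * c * K * (1 - q) / (α + 1) * S := by rw [hK]
  have hDneg : (2 * c * K * (α + q) / (α + 1) - 2 * c * K) * S + (p:ℝ) * (c ^ 2 * K2) ≤ 0 := by
    have hid : (2 * c * K * (α + q) / (α + 1) - 2 * c * K) * S
        = -(2 * c * K * (1 - q) / (α + 1) * S) := by field_simp; ring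
    rw [hid]
    linarith [main]
  -- final assembly
  calc ∫ ω, ∑ i, (X i ω / (α + 1) + c * (∏ j, X j ω) ^ q - β i) ^ 2 ∂ℙ
      = ∫ ω, ((∑ i, (X i ω / (α + 1) - β i) ^ 2)
          + ∑ i, (2 * c * (∏ j, X j ω) ^ q * (X i ω / (α + 1) - β i)
              + c ^ 2 * ((∏ j, X j ω) ^ q) ^ 2)) ∂ℙ :=
        integral_congr_ae (Filter.Eventually.of_forall hsplit)
    _ = (∫ ω, ∑ i, (X i ω / (α + 1) - β i) ^ 2 ∂ℙ)
        + ∫ ω, ∑ i, (2 * c * (∏ j, X j ω) ^ q * (X i ω / (α + 1) - β i)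
            + c ^ 2 * ((∏ j, X j ω) ^ q) ^ 2) ∂ℙ := integral_add intRHS intDsum
    _ ≤ ∫ ω, ∑ i, (X i ω / (α + 1) - β i) ^ 2 ∂ℙ := by
        have h5 : ∫ ω, ∑ i, (2 * c * (∏ j, X j ω) ^ q * (X i ω / (α + 1) - β i)
            + c ^ 2 * ((∏ j, X j ω) ^ q) ^ 2) ∂ℙ ≤ 0 := by
          rw [hDval, hsum]
          exact hDneg
        linarith
end

section
/- Stein's Lemma for the Gamma distribution: let α > 0, β > 0, and X ~ Gamma(α, β) (shape α, scale β). Let h : (0,∞) → ℝ be continuously differentiable such that E[|X h(X)|] < ∞, E[|X h'(X)|] < ∞, and the boundary terms vanish: x^α e^{−x/β} h(x) → 0 as x → 0⁺ and as x → ∞. Then E[(X − αβ) h(X)] = β · E[X h'(X)]. -/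
open MeasureTheory ProbabilityTheory Real Set Filter
open scoped NNReal ENNReal

lemma gamma_integral_conv (a r : ℝ) (ha : 0 < a) (hr : 0 < r) (f : ℝ → ℝ) :
    ∫ x, f x ∂(gammaMeasure a r)
      = ∫ x in Ioi (0:ℝ), gammaPDFReal a r x * f x := by
  have hmeas : Measurable fun x => (gammaPDFReal a r x).toNNReal :=
    (measurable_gammaPDFReal a r).real_toNNReal
  have h1 : ∫ x, f x ∂(gammaMeasure a r)
      = ∫ x, ((gammaPDFReal a r x).toNNReal : ℝ≥0) • f x :=
    integral_withDensity_eq_integral_smul hmeas f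
  have h2 : ∀ x : ℝ, ((gammaPDFReal a r x).toNNReal : ℝ≥0) • f x
      = gammaPDFReal a r x * f x := fun x => by
    rw [NNReal.smul_def, Real.coe_toNNReal _ (gammaPDFReal_nonneg ha hr x), smul_eq_mul]
  rw [h1]
  simp only [h2]
  rw [← setIntegral_eq_integral_of_forall_compl_eq_zero
    (s := Ici (0:ℝ)) (fun x hx => by
      simp only [mem_Ici, not_le] at hx
      simp [gammaPDFReal, if_neg (not_le.mpr hx)]),
    integral_Ici_eq_integral_Ioi]

lemma gamma_integrable_conv (a r : ℝ) (ha : 0 < a) (hr : 0 < r) {f : ℝ → ℝ}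
    (hf : Integrable f (gammaMeasure a r)) :
    IntegrableOn (fun x => gammaPDFReal a r x * f x) (Ioi (0:ℝ)) := by
  have hmeas : Measurable (gammaPDF a r) :=
    (measurable_gammaPDFReal a r).ennreal_ofReal
  have h1 : Integrable (fun x => f x * (gammaPDF a r x).toReal) volume :=
    (integrable_withDensity_iff hmeas
      (ae_of_all _ fun x => ENNReal.ofReal_lt_top)).mp hf
  have h2 : ∀ x, f x * (gammaPDF a r x).toReal = gammaPDFReal a r x * f x := fun x => by
    rw [gammaPDF, ENNReal.toReal_ofReal (gammaPDFReal_nonneg ha hr x), mul_comm]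
  exact ((h1.congr (ae_of_all _ h2))).integrableOn

/-- weight function -/
noncomputable def steinW (α β x : ℝ) : ℝ := x ^ (α - 1) * Real.exp (-(1/β * x))

/-- the auxiliary product for integration by parts -/
noncomputable def steinU (α β x : ℝ) : ℝ := x ^ α * Real.exp (-(1/β * x))

noncomputable def steinU' (α β x : ℝ) : ℝ :=
  (α * x ^ (α - 1) - 1/β * x ^ α) * Real.exp (-(1/β * x))

noncomputable def steinPsi (h' : ℝ → ℝ) (x : ℝ) : ℝ := ∫ t in x..1, |h' t|

/-- Stein's lemma for the Gamma distribution. Let `X ~ Gamma(α, β)` (shape `α`,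
scale `β`, i.e. rate `1/β`), and let `h` be continuously differentiable on `(0,∞)` with
`E[|X h(X)|] < ∞`, `E[|X h'(X)|] < ∞` and vanishing boundary terms
`x^α e^{−x/β} h(x) → 0` as `x → 0⁺` and `x → ∞`. Then `E[(X − αβ)h(X)] = β E[X h'(X)]`. -/
theorem stmt_3 (α β : ℝ) (hα : 0 < α) (hβ : 0 < β) (h h' : ℝ → ℝ)
    (hdiff : ∀ x ∈ Ioi (0 : ℝ), HasDerivAt h (h' x) x)
    (hcont : ContinuousOn h' (Ioi 0))
    (hint1 : Integrable (fun x => x * h x) (gammaMeasure α (1 / β)))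
    (hint2 : Integrable (fun x => x * h' x) (gammaMeasure α (1 / β)))
    (hlim0 : Filter.Tendsto (fun x => x ^ α * Real.exp (-x / β) * h x)
      (nhdsWithin 0 (Ioi 0)) (nhds 0))
    (hlimtop : Filter.Tendsto (fun x => x ^ α * Real.exp (-x / β) * h x)
      Filter.atTop (nhds 0)) :
    ∫ x, (x - α * β) * h x ∂(gammaMeasure α (1 / β))
      = β * ∫ x, x * h' x ∂(gammaMeasure α (1 / β)) := by
  have hr : (0:ℝ) < 1/β := by positivity
  set r : ℝ := 1/β with hrdef
  set c : ℝ := r ^ α / Gamma α with hcdef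
  have hc : 0 < c := div_pos (rpow_pos_of_pos hr α) (Gamma_pos_of_pos hα)
  have hhc : ContinuousOn h (Ioi 0) := fun x hx =>
    (hdiff x hx).continuousAt.continuousWithinAt
  have habs : ContinuousOn (fun t => |h' t|) (Ioi (0:ℝ)) := hcont.abs
  -- weight basics
  have hw_pos : ∀ x : ℝ, 0 < x → 0 < steinW α β x := fun x hx =>
    mul_pos (rpow_pos_of_pos hx _) (exp_pos _)
  have hw_cont : ContinuousOn (steinW α β) (Ioi 0) := by
    apply ContinuousOn.mul
    · exact fun x hx => ((Real.continuousAt_rpow_const x (α-1)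
        (Or.inl (ne_of_gt hx))).continuousWithinAt)
    · exact (Real.continuous_exp.comp (by continuity)).continuousOn
  have hpdf : ∀ x ∈ Ioi (0:ℝ), gammaPDFReal α r x = c * steinW α β x := by
    intro x hx
    simp only [gammaPDFReal, if_pos (le_of_lt (mem_Ioi.mp hx)), steinW, hcdef, hrdef]
    ring
  -- integrabilities
  have J1 : IntegrableOn (fun x => steinW α β x * (x * h x)) (Ioi (0:ℝ)) := by
    have h0 := (gamma_integrable_conv α r hα hr hint1).const_mul c⁻¹
    refine MeasureTheory.IntegrableOn.congr_fun h0 (fun x hx => ?_) measurableSet_Ioi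
    rw [hpdf x hx]; field_simp
  have J2 : IntegrableOn (fun x => steinW α β x * (x * h' x)) (Ioi (0:ℝ)) := by
    have h0 := (gamma_integrable_conv α r hα hr hint2).const_mul c⁻¹
    refine MeasureTheory.IntegrableOn.congr_fun h0 (fun x hx => ?_) measurableSet_Ioi
    rw [hpdf x hx]; field_simp
  -- the hard integrability: J3
  have J3 : IntegrableOn (fun x => steinW α β x * h x) (Ioi (0:ℝ)) := by
    have hwh_cont : ContinuousOn (fun x => steinW α β x * h x) (Ioi 0) := hw_cont.mul hhc
    have J3b : IntegrableOn (fun x => steinW α β x * h x) (Ioi (1:ℝ)) := by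
      refine Integrable.mono (J1.mono_set (Ioi_subset_Ioi zero_le_one)) ?_ ?_
      · exact (hwh_cont.aestronglyMeasurable measurableSet_Ioi).mono_measure
          (Measure.restrict_mono (Ioi_subset_Ioi zero_le_one) le_rfl)
      · rw [ae_restrict_iff' measurableSet_Ioi]
        refine ae_of_all _ (fun x hx => ?_)
        have hx1 : (1:ℝ) < x := hx
        have hx0 : (0:ℝ) < x := lt_trans one_pos hx1
        have hw0 : 0 ≤ steinW α β x := (hw_pos x hx0).le
        rw [Real.norm_eq_abs, Real.norm_eq_abs, abs_mul, abs_mul, abs_mul,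
          abs_of_nonneg hw0, abs_of_nonneg hx0.le]
        nlinarith [mul_nonneg (mul_nonneg hw0 (abs_nonneg (h x)))
          (sub_nonneg.mpr hx1.le), abs_nonneg (h x)]
    -- derivative of steinPsi
    have hψd : ∀ x ∈ Ioi (0:ℝ), HasDerivAt (steinPsi h') (-|h' x|) x := by
      intro x hx
      have hii : IntervalIntegrable (fun t => |h' t|) volume x 1 := by
        apply (habs.mono (fun t ht => ?_)).intervalIntegrable
        exact lt_of_lt_of_le (lt_min hx one_pos) ht.1
      exact intervalIntegral.integral_hasDerivAt_left hii
        (habs.stronglyMeasurableAtFilter isOpen_Ioi x hx)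
        (habs.continuousAt (Ioi_mem_nhds hx))
    have hψc : ContinuousOn (steinPsi h') (Ioi 0) := fun x hx =>
      (hψd x hx).continuousAt.continuousWithinAt
    have hψ0 : ∀ x : ℝ, 0 < x → x ≤ 1 → 0 ≤ steinPsi h' x := fun x hx0 hx1 =>
      intervalIntegral.integral_nonneg hx1 (fun t _ => abs_nonneg _)
    -- bound |h| near 0
    have hb_h : ∀ x : ℝ, 0 < x → x ≤ 1 → |h x| ≤ |h 1| + steinPsi h' x := by
      intro x hx0 hx1
      have hsub : uIcc x 1 ⊆ Ioi (0:ℝ) := fun t ht =>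
        lt_of_lt_of_le (lt_min hx0 one_pos) ht.1
      have hftc : ∫ t in x..1, h' t = h 1 - h x :=
        intervalIntegral.integral_eq_sub_of_hasDerivAt (fun t ht => hdiff t (hsub ht))
          ((hcont.mono hsub).intervalIntegrable)
      have h1 : h x = h 1 - ∫ t in x..1, h' t := by rw [hftc]; ring
      have h2 : |∫ t in x..1, h' t| ≤ steinPsi h' x := by
        simpa [Real.norm_eq_abs, steinPsi] using
          intervalIntegral.norm_integral_le_integral_norm
            (f := h') (μ := volume) (a := x) (b := 1) hx1
      have h3 : |h 1 - ∫ t in x..1, h' t| ≤ |h 1| + |∫ t in x..1, h' t| := by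
        simpa [sub_eq_add_neg, abs_neg] using abs_add_le (h 1) (-(∫ t in x..1, h' t))
      rw [h1]
      linarith
    set M : ℝ := ∫ x in Ioc (0:ℝ) 1, ‖steinW α β x * (x * h' x)‖ with hMdef
    have hM_int : IntegrableOn (fun x => ‖steinW α β x * (x * h' x)‖) (Ioc (0:ℝ) 1) :=
      MeasureTheory.IntegrableOn.mono_set (Integrable.norm J2) Ioc_subset_Ioi_self
    set C : ℝ := |h 1|/α + (Real.exp (1/β) / α) * M with hCdef
    set G : ℝ → ℝ := fun x => x ^ α / α * (|h 1| + steinPsi h' x) with hGdef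
    have hGd : ∀ x ∈ Ioi (0:ℝ), HasDerivAt G
        (x ^ (α-1) * (|h 1| + steinPsi h' x) - x ^ α / α * |h' x|) x := by
      intro x hx
      have h1 : HasDerivAt (fun y : ℝ => y ^ α / α) (x ^ (α-1)) x := by
        have := (hasDerivAt_rpow_const (x := x) (p := α) (Or.inl (ne_of_gt hx))).div_const α
        refine this.congr_deriv ?_
        field_simp
      have h2 : HasDerivAt (fun y => |h 1| + steinPsi h' y) (-|h' x|) x :=
        (hψd x hx).const_add _
      have := h1.mul h2
      refine this.congr_deriv ?_
      ring
    have hEst : ∀ ε : ℝ, 0 < ε → ε ≤ 1 → ∫ x in Ioc ε 1, ‖steinW α β x * h x‖ ≤ C := by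
      intro ε hε0 hε1
      have hsubI : Icc ε 1 ⊆ Ioi (0:ℝ) := fun t ht => lt_of_lt_of_le hε0 ht.1
      have huI : uIcc ε 1 = Icc ε 1 := uIcc_of_le hε1
      have hrpow : ContinuousOn (fun y : ℝ => y ^ (α-1)) (Icc ε 1) := fun t ht =>
        (Real.continuousAt_rpow_const t (α-1) (Or.inl (ne_of_gt (hsubI ht)))).continuousWithinAt
      have hrpow2 : ContinuousOn (fun y : ℝ => y ^ α) (Icc ε 1) := fun t ht =>
        (Real.continuousAt_rpow_const t α (Or.inl (ne_of_gt (hsubI ht)))).continuousWithinAt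
      have hc1 : ContinuousOn (fun x => ‖steinW α β x * h x‖) (Icc ε 1) :=
        (hwh_cont.mono hsubI).norm
      have hc2 : ContinuousOn (fun x => x ^ (α-1) * (|h 1| + steinPsi h' x)) (Icc ε 1) :=
        hrpow.mul (continuousOn_const.add (hψc.mono hsubI))
      have hc3 : ContinuousOn (fun x => x ^ α / α * |h' x|) (Icc ε 1) :=
        (hrpow2.div_const α).mul (hcont.mono hsubI).abs
      have hc4 : ContinuousOn (fun x => Real.exp (1/β)/α * ‖steinW α β x * (x * h' x)‖)
          (Icc ε 1) := by
        refine continuousOn_const.mul (ContinuousOn.norm ?_)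
        exact (hw_cont.mono hsubI).mul ((continuousOn_id.mul (hcont.mono hsubI)))
      have hi1 : IntervalIntegrable (fun x => ‖steinW α β x * h x‖) volume ε 1 :=
        (huI.symm ▸ hc1).intervalIntegrable
      have hi2 : IntervalIntegrable (fun x => x ^ (α-1) * (|h 1| + steinPsi h' x)) volume ε 1 :=
        (huI.symm ▸ hc2).intervalIntegrable
      have hi3 : IntervalIntegrable (fun x => x ^ α / α * |h' x|) volume ε 1 :=
        (huI.symm ▸ hc3).intervalIntegrable
      have hi4 : IntervalIntegrable (fun x => Real.exp (1/β)/α * ‖steinW α β x * (x * h' x)‖)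
          volume ε 1 := (huI.symm ▸ hc4).intervalIntegrable
      rw [← intervalIntegral.integral_of_le hε1]
      have step1 : ∫ x in ε..1, ‖steinW α β x * h x‖
          ≤ ∫ x in ε..1, x ^ (α-1) * (|h 1| + steinPsi h' x) := by
        refine intervalIntegral.integral_mono_on hε1 hi1 hi2 (fun x hx => ?_)
        have hx0 : 0 < x := hsubI hx
        have hexp : Real.exp (-(1/β * x)) ≤ 1 := by
          have h0 : (0:ℝ) ≤ 1/β * x := mul_nonneg (div_nonneg zero_le_one hβ.le) hx0.le
          calc Real.exp (-(1/β * x)) ≤ Real.exp 0 := Real.exp_le_exp.mpr (by linarith)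
            _ = 1 := Real.exp_zero
        have hrp : (0:ℝ) ≤ x ^ (α-1) := (rpow_pos_of_pos hx0 _).le
        rw [Real.norm_eq_abs, abs_mul, abs_of_nonneg (hw_pos x hx0).le]
        have hhb := hb_h x hx0 hx.2
        calc steinW α β x * |h x| ≤ x ^ (α-1) * |h x| := by
              simp only [steinW]
              rw [show x ^ (α-1) * Real.exp (-(1/β * x)) * |h x|
                = Real.exp (-(1/β * x)) * (x ^ (α-1) * |h x|) by ring]
              nth_rewrite 2 [← one_mul (x ^ (α-1) * |h x|)]
              exact mul_le_mul_of_nonneg_right hexp (mul_nonneg hrp (abs_nonneg _))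
          _ ≤ x ^ (α-1) * (|h 1| + steinPsi h' x) :=
              mul_le_mul_of_nonneg_left hhb hrp
      have step2 : ∫ x in ε..1, x ^ (α-1) * (|h 1| + steinPsi h' x)
          = (G 1 - G ε) + ∫ x in ε..1, x ^ α / α * |h' x| := by
        have hftc : ∫ x in ε..1,
            (x ^ (α-1) * (|h 1| + steinPsi h' x) - x ^ α / α * |h' x|) = G 1 - G ε :=
          intervalIntegral.integral_eq_sub_of_hasDerivAt
            (fun x hx => hGd x (hsubI (huI ▸ hx))) ((huI.symm ▸ (hc2.sub hc3)).intervalIntegrable)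
        rw [intervalIntegral.integral_sub hi2 hi3] at hftc
        linarith
      have hG1 : G 1 = |h 1| / α := by
        simp only [hGdef, steinPsi, intervalIntegral.integral_same, Real.one_rpow, add_zero]
        ring
      have hGε : 0 ≤ G ε :=
        mul_nonneg (by positivity) (add_nonneg (abs_nonneg _) (hψ0 ε hε0 hε1))
      have step3 : ∫ x in ε..1, x ^ α / α * |h' x| ≤ (Real.exp (1/β) / α) * M := by
        have pt : ∀ x ∈ Icc ε 1, x ^ α / α * |h' x|
            ≤ Real.exp (1/β)/α * ‖steinW α β x * (x * h' x)‖ := by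
          intro x hx
          have hx0 : 0 < x := hsubI hx
          have hxa : x ^ (α-1) * x = x ^ α := by
            rw [← Real.rpow_add_one (ne_of_gt hx0) (α-1)]
            norm_num
          rw [Real.norm_eq_abs, abs_mul, abs_mul, abs_of_nonneg (hw_pos x hx0).le,
            abs_of_nonneg hx0.le]
          simp only [steinW]
          rw [show x ^ (α-1) * Real.exp (-(1/β * x)) * (x * |h' x|)
            = (x ^ (α-1) * x) * Real.exp (-(1/β * x)) * |h' x| by ring, hxa]
          have he : 1 ≤ Real.exp (1/β) * Real.exp (-(1/β * x)) := by
            rw [← Real.exp_add]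
            have h0 : (0:ℝ) ≤ 1/β + -(1/β * x) := by
              have := mul_nonneg (div_nonneg zero_le_one hβ.le) (sub_nonneg.mpr hx.2)
              nlinarith
            calc (1:ℝ) = Real.exp 0 := Real.exp_zero.symm
              _ ≤ Real.exp (1/β + -(1/β * x)) := Real.exp_le_exp.mpr h0
          rw [show Real.exp (1/β)/α * (x ^ α * Real.exp (-(1/β * x)) * |h' x|)
            = (Real.exp (1/β) * Real.exp (-(1/β * x))) * (x ^ α / α * |h' x|) by ring]
          nth_rewrite 1 [← one_mul (x ^ α / α * |h' x|)]
          exact mul_le_mul_of_nonneg_right he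
            (mul_nonneg (div_nonneg (rpow_pos_of_pos hx0 α).le hα.le) (abs_nonneg _))
        have step3a := intervalIntegral.integral_mono_on hε1 hi3 hi4 pt
        have step3b : ∫ x in ε..1, Real.exp (1/β)/α * ‖steinW α β x * (x * h' x)‖
            = Real.exp (1/β)/α * ∫ x in Ioc ε 1, ‖steinW α β x * (x * h' x)‖ := by
          rw [intervalIntegral.integral_const_mul, intervalIntegral.integral_of_le hε1]
        have step3c : ∫ x in Ioc ε 1, ‖steinW α β x * (x * h' x)‖ ≤ M := by
          rw [hMdef]
          refine setIntegral_mono_set hM_int ?_ ?_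
          · exact ae_of_all _ (fun x => norm_nonneg _)
          · exact (Ioc_subset_Ioc_left hε0.le).eventuallyLE
        rw [step3b] at step3a
        have hnn : (0:ℝ) ≤ Real.exp (1/β)/α := by positivity
        calc ∫ x in ε..1, x ^ α / α * |h' x|
            ≤ Real.exp (1/β)/α * ∫ x in Ioc ε 1, ‖steinW α β x * (x * h' x)‖ := step3a
          _ ≤ Real.exp (1/β)/α * M := mul_le_mul_of_nonneg_left step3c hnn
      calc ∫ x in ε..1, ‖steinW α β x * h x‖
          ≤ (G 1 - G ε) + ∫ x in ε..1, x ^ α / α * |h' x| := by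
            rw [← step2]; exact step1
        _ ≤ |h 1|/α + (Real.exp (1/β) / α) * M := by
            rw [hG1]; linarith
        _ = C := by rw [hCdef]
    have J3a : IntegrableOn (fun x => steinW α β x * h x) (Ioc (0:ℝ) 1) := by
      have hC : ∀ n : ℕ, ∫ x in Ioc (1/(n+1):ℝ) 1, ‖steinW α β x * h x‖ ≤ C := by
        intro n
        apply hEst
        · positivity
        · rw [div_le_one (by positivity)]
          simp
      refine integrableOn_Ioc_of_intervalIntegral_norm_bounded_left
        (a := fun n : ℕ => 1/((n:ℝ)+1)) (l := atTop) (I := C) (fun n => ?_)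
        tendsto_one_div_add_atTop_nhds_zero_nat (Eventually.of_forall hC)
      have hpos : (0:ℝ) < 1/((n:ℝ)+1) := by positivity
      have hco : ContinuousOn (fun x => steinW α β x * h x) (Icc (1/((n:ℝ)+1)) 1) :=
        hwh_cont.mono (fun t ht => lt_of_lt_of_le hpos ht.1)
      exact hco.integrableOn_Icc.mono_set Ioc_subset_Icc_self
    rw [← Ioc_union_Ioi_eq_Ioi (zero_le_one (α := ℝ))]
    exact J3a.union J3b
  -- derivative of steinU
  have hud : ∀ x ∈ Ioi (0:ℝ), HasDerivAt (steinU α β) (steinU' α β x) x := by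
    intro x hx
    have h1 : HasDerivAt (fun y : ℝ => y ^ α) (α * x ^ (α-1)) x :=
      hasDerivAt_rpow_const (Or.inl (ne_of_gt hx))
    have h2 : HasDerivAt (fun y : ℝ => Real.exp (-(1/β * y)))
        (-(1/β) * Real.exp (-(1/β * x))) x := by
      have h3 : HasDerivAt (fun y : ℝ => -(1/β * y)) (-(1/β)) x := by
        simpa [Pi.neg_def] using ((hasDerivAt_id x).const_mul (1/β)).neg
      simpa [mul_comm, Function.comp_def] using (Real.hasDerivAt_exp (-(1/β * x))).comp x h3
    have := h1.mul h2
    refine this.congr_deriv ?_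
    simp only [steinU']
    ring
  -- integrand integrable
  have hI : IntegrableOn (fun x => steinU' α β x * h x + steinU α β x * h' x)
      (Ioi (0:ℝ)) := by
    have base := ((J3.const_mul α).sub (J1.const_mul r)).add J2
    refine MeasureTheory.IntegrableOn.congr_fun base (fun x hx => ?_) measurableSet_Ioi
    have hxa : x ^ α = x ^ (α-1) * x := by
      rw [← Real.rpow_add_one (ne_of_gt hx) (α-1)]
      norm_num
    simp only [Pi.add_apply, Pi.sub_apply, steinU, steinU', steinW, hxa]
    ring
  -- boundary limits
  have harg : (fun x : ℝ => x ^ α * Real.exp (-x / β) * h x)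
      = steinU α β * h := by
    funext x
    simp only [Pi.mul_apply, steinU]
    rw [show -x/β = -(1/β * x) by ring]
  have hz : Tendsto (steinU α β * h) (nhdsWithin 0 (Ioi 0)) (nhds 0) := harg ▸ hlim0
  have ht : Tendsto (steinU α β * h) atTop (nhds 0) := harg ▸ hlimtop
  have key : ∫ x in Ioi (0:ℝ), (steinU' α β x * h x + steinU α β x * h' x) = 0 := by
    have := integral_Ioi_deriv_mul_eq_sub (u := steinU α β) (u' := steinU' α β)
      (v := h) (v' := h') hud hdiff hI hz ht
    simpa using this
  -- final computation
  rw [gamma_integral_conv α r hα hr, gamma_integral_conv α r hα hr]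
  have e1 : ∫ x in Ioi (0:ℝ), gammaPDFReal α r x * ((x - α * β) * h x)
      = c * ∫ x in Ioi (0:ℝ), steinW α β x * ((x - α * β) * h x) := by
    rw [← integral_const_mul]
    refine setIntegral_congr_fun measurableSet_Ioi (fun x hx => ?_)
    rw [hpdf x hx]; ring
  have e2 : ∫ x in Ioi (0:ℝ), gammaPDFReal α r x * (x * h' x)
      = c * ∫ x in Ioi (0:ℝ), steinW α β x * (x * h' x) := by
    rw [← integral_const_mul]
    refine setIntegral_congr_fun measurableSet_Ioi (fun x hx => ?_)
    rw [hpdf x hx]; ring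
  rw [e1, e2]
  have hAB : ∫ x in Ioi (0:ℝ), steinW α β x * ((x - α * β) * h x)
      = β * ∫ x in Ioi (0:ℝ), steinW α β x * (x * h' x) := by
    have hsplit : EqOn (fun x => steinW α β x * ((x - α * β) * h x))
        (fun x => β * (steinW α β x * (x * h' x))
          - β * (steinU' α β x * h x + steinU α β x * h' x)) (Ioi 0) := by
      intro x hx
      have hxa : x ^ α = x ^ (α-1) * x := by
        rw [← Real.rpow_add_one (ne_of_gt hx) (α-1)]
        norm_num
      simp only [steinU, steinU', steinW, hxa]
      field_simp
      ring
    rw [setIntegral_congr_fun measurableSet_Ioi hsplit, integral_sub (J2.const_mul β)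
      (hI.const_mul β), integral_const_mul, integral_const_mul, key]
    ring
  rw [hAB]
  ring
end

section
/- Let p ≥ 1, α > 0, and let (X₁, …, X_p) be a random vector of positive random variables (not necessarily independent) such that each marginal X_i has the Gamma(α, β_i) distribution with scale β_i > 0, and (∏_{i=1}^p X_i)^{1/p} is integrable. Then E[(∏_{i=1}^p X_i)^{1/p}] ≥ α · exp(−1/α) · (∏_{i=1}^p β_i)^{1/p}. -/
open MeasureTheory ProbabilityTheory Real Set Filter Topology
open scoped ENNReal NNReal

namespace Stmt13Aux


lemma exp_integral_le {α : Type*} [MeasurableSpace α] (μ : Measure α) [IsProbabilityMeasure μ]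
    {f : α → ℝ} (hf : Integrable f μ) (hef : Integrable (fun x => exp (f x)) μ) :
    exp (∫ x, f x ∂μ) ≤ ∫ x, exp (f x) ∂μ := by
  set c := ∫ x, f x ∂μ with hc
  have h1 : ∀ x, exp c * (f x - c + 1) ≤ exp (f x) := by
    intro x
    calc exp c * (f x - c + 1) ≤ exp c * exp (f x - c) :=
          mul_le_mul_of_nonneg_left (Real.add_one_le_exp _) (exp_pos c).le
      _ = exp (f x) := by rw [← Real.exp_add]; ring_nf
  have h2 : Integrable (fun x => exp c * (f x - c + 1)) μ :=
    (((hf.sub (integrable_const c)).add (integrable_const 1)).const_mul _)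
  have h3 := integral_mono h2 hef h1
  have h4 : ∫ x, exp c * (f x - c + 1) ∂μ = exp c := by
    rw [integral_const_mul]
    have hfc : Integrable (fun x => f x - c) μ := hf.sub (integrable_const c)
    have : ∫ x, (f x - c + 1) ∂μ = (∫ x, f x ∂μ) - c + 1 := by
      rw [integral_add hfc (integrable_const 1), integral_sub hf (integrable_const c)]
      simp
    rw [this, ← hc]
    simp
  rwa [h4] at h3

lemma integrableOn_rpow_exp {a r : ℝ} (ha : 0 < a) (hr : 0 < r) :
    IntegrableOn (fun x : ℝ => x ^ (a - 1) * exp (-(r * x))) (Ioi 0) := by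
  have h := Real.GammaIntegral_convergent ha
  have h2 : IntegrableOn (fun x : ℝ => exp (-(r * x)) * (r * x) ^ (a - 1)) (Ioi 0) := by
    have := (integrableOn_Ioi_comp_mul_left_iff
      (fun x : ℝ => exp (-x) * x ^ (a - 1)) 0 hr).2 (by simpa using h)
    simpa using this
  have h3 := h2.const_mul ((r : ℝ) ^ (a - 1))⁻¹
  refine h3.congr ((ae_restrict_iff' measurableSet_Ioi).2 (ae_of_all _ fun x hx => ?_))
  have hx0 : (0 : ℝ) < x := hx
  simp only
  rw [Real.mul_rpow hr.le hx0.le]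
  field_simp [(Real.rpow_pos_of_pos hr (a-1)).ne']


lemma gammaPDF_eq_nnreal (a r : ℝ) :
    gammaPDF a r = fun x => ((Real.toNNReal (gammaPDFReal a r x) : ℝ≥0) : ℝ≥0∞) := by
  funext x
  rfl

lemma integral_gamma_eq {a r : ℝ} (ha : 0 < a) (hr : 0 < r) (g : ℝ → ℝ) :
    ∫ x, g x ∂(gammaMeasure a r) = ∫ x in Ioi 0, gammaPDFReal a r x * g x := by
  have hm : Measurable fun x => Real.toNNReal (gammaPDFReal a r x) :=
    (measurable_gammaPDFReal a r).real_toNNReal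
  rw [gammaMeasure, gammaPDF_eq_nnreal, integral_withDensity_eq_integral_smul hm]
  have hsm : ∀ x, (Real.toNNReal (gammaPDFReal a r x)) • g x = gammaPDFReal a r x * g x := by
    intro x
    rw [NNReal.smul_def, Real.coe_toNNReal _ (gammaPDFReal_nonneg ha hr x)]
    rfl
  simp_rw [hsm]
  rw [← setIntegral_eq_integral_of_forall_compl_eq_zero
    (s := Ici 0) (fun x hx => ?_), integral_Ici_eq_integral_Ioi]
  have hx0 : x < 0 := not_le.1 (by simpa using hx)
  simp [gammaPDFReal, not_le.2 hx0]

lemma integrable_gamma_iff {a r : ℝ} (ha : 0 < a) (hr : 0 < r) (g : ℝ → ℝ) :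
    Integrable g (gammaMeasure a r) ↔
      IntegrableOn (fun x => gammaPDFReal a r x * g x) (Ioi 0) := by
  have hm : Measurable fun x => Real.toNNReal (gammaPDFReal a r x) :=
    (measurable_gammaPDFReal a r).real_toNNReal
  rw [gammaMeasure, gammaPDF_eq_nnreal, integrable_withDensity_iff_integrable_smul hm]
  have hsm : (fun x => (Real.toNNReal (gammaPDFReal a r x)) • g x)
      = fun x => gammaPDFReal a r x * g x := by
    funext x
    rw [NNReal.smul_def, Real.coe_toNNReal _ (gammaPDFReal_nonneg ha hr x)]
    rfl
  rw [hsm]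
  constructor
  · exact fun h => h.integrableOn
  · intro h
    rw [← integrableOn_univ, ← Iic_union_Ioi (a := (0:ℝ)), integrableOn_union]
    refine ⟨?_, h⟩
    refine (integrable_zero _ _ _).congr ?_
    rw [EventuallyEq, ae_restrict_iff' measurableSet_Iic]
    have hne : ∀ᵐ x : ℝ, x ≠ 0 := by
      rw [ae_iff]
      simp [measure_singleton (0:ℝ)]

    filter_upwards [hne] with x hx0 hx
    have : x < 0 := lt_of_le_of_ne (mem_Iic.1 hx) hx0
    simp [gammaPDFReal, not_le.2 this]

lemma gamma_ae_pos {a r : ℝ} (ha : 0 < a) (hr : 0 < r) :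
    ∀ᵐ x ∂(gammaMeasure a r), 0 < x := by
  rw [ae_iff]
  have hset : {x : ℝ | ¬ 0 < x} = Iic 0 := by ext x; simp
  rw [hset, gammaMeasure, withDensity_apply _ measurableSet_Iic,
    lintegral_Iic_eq_lintegral_Iio_add_Icc _ le_rfl,
    lintegral_gammaPDF_of_nonpos le_rfl]
  have : Icc (0:ℝ) 0 = {0} := Icc_self 0
  rw [this, zero_add]
  exact setLIntegral_measure_zero _ _ (measure_singleton 0)


lemma rpow_le_bound {a s x : ℝ} (ha : 0 < a) (h1 : -(a/2) ≤ s) (h2 : s ≤ a) (hx : 0 < x) :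
    x ^ s ≤ x ^ (-(a/2)) + x ^ a := by
  rcases le_or_gt 1 x with hx1 | hx1
  · have : x ^ s ≤ x ^ a := Real.rpow_le_rpow_of_exponent_le hx1 h2
    have h0 : 0 ≤ x ^ (-(a/2)) := (Real.rpow_pos_of_pos hx _).le
    linarith
  · have : x ^ s ≤ x ^ (-(a/2)) := Real.rpow_le_rpow_of_exponent_ge hx hx1.le h1
    have h0 : 0 ≤ x ^ a := (Real.rpow_pos_of_pos hx _).le
    linarith

lemma abs_log_le {a x : ℝ} (ha : 0 < a) (hx : 0 < x) :
    |Real.log x| ≤ (2/a) * x ^ (-(a/2)) + x := by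
  have hpow : 0 < x ^ (-(a/2)) := Real.rpow_pos_of_pos hx _
  rcases le_or_gt 1 x with hx1 | hx1
  · rw [abs_of_nonneg (Real.log_nonneg hx1)]
    have := Real.log_le_sub_one_of_pos hx
    have h0 : 0 ≤ (2/a) * x ^ (-(a/2)) := by positivity
    linarith
  · rw [abs_of_nonpos (Real.log_nonpos hx.le hx1.le)]
    have hlog : Real.log (x ^ (-(a/2))) = -(a/2) * Real.log x := Real.log_rpow hx _
    have hle : Real.log (x ^ (-(a/2))) ≤ x ^ (-(a/2)) - 1 := Real.log_le_sub_one_of_pos hpow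
    have h2a : 0 < 2/a := by positivity
    have h3 : -(a/2) * Real.log x ≤ x ^ (-(a/2)) - 1 := hlog ▸ hle
    have h5 : (2/a) * (-(a/2) * Real.log x) ≤ (2/a) * (x ^ (-(a/2)) - 1) :=
      mul_le_mul_of_nonneg_left h3 h2a.le
    have h4 : (2/a) * (-(a/2) * Real.log x) = -Real.log x := by
      field_simp
    have h6 : (2/a) * (x ^ (-(a/2)) - 1) = (2/a) * x ^ (-(a/2)) - (2/a) := by ring
    linarith

lemma integrable_rpow_gamma {a r : ℝ} (ha : 0 < a) (hr : 0 < r) {s : ℝ}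
    (h1 : -(a/2) ≤ s) (h2 : s ≤ a) :
    Integrable (fun x => x ^ s) (gammaMeasure a r) := by
  rw [integrable_gamma_iff ha hr]
  have hmaj : IntegrableOn
      (fun x : ℝ => r ^ a / Gamma a * (x ^ (a/2 - 1) * exp (-(r * x)) + x ^ (2*a - 1) * exp (-(r * x)))) (Ioi 0) :=
    (((integrableOn_rpow_exp (by linarith : (0:ℝ) < a/2) hr).add
      (integrableOn_rpow_exp (by linarith : (0:ℝ) < 2*a) hr)).const_mul _)
  refine hmaj.mono' ?_ ?_
  · exact (((measurable_gammaPDFReal a r).mul (measurable_id'.pow_const s)).aestronglyMeasurable).restrict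
  · refine (ae_restrict_iff' measurableSet_Ioi).2 (ae_of_all _ fun x hx => ?_)
    have hx0 : (0:ℝ) < x := hx
    have hpdf : gammaPDFReal a r x = r ^ a / Gamma a * x ^ (a-1) * exp (-(r * x)) := by
      simp [gammaPDFReal, hx0.le]
    have hnn : 0 ≤ gammaPDFReal a r x := gammaPDFReal_nonneg ha hr x
    rw [norm_mul, norm_of_nonneg hnn, norm_of_nonneg (Real.rpow_pos_of_pos hx0 s).le, hpdf]
    have hb := rpow_le_bound ha h1 h2 hx0
    have hc : 0 < r ^ a / Gamma a := by
      have := Real.Gamma_pos_of_pos ha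
      positivity
    have hkey : x ^ (a-1) * exp (-(r * x)) * x ^ s
        ≤ x ^ (a/2 - 1) * exp (-(r * x)) + x ^ (2*a - 1) * exp (-(r * x)) := by
      have e1 : x ^ (a-1) * x ^ (-(a/2)) = x ^ (a/2 - 1) := by
        rw [← Real.rpow_add hx0]; ring_nf
      have e2 : x ^ (a-1) * x ^ a = x ^ (2*a - 1) := by
        rw [← Real.rpow_add hx0]; ring_nf
      have hxa : 0 ≤ x ^ (a-1) := (Real.rpow_pos_of_pos hx0 _).le
      have hexp : 0 < exp (-(r * x)) := exp_pos _
      calc x ^ (a-1) * exp (-(r * x)) * x ^ s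
          ≤ x ^ (a-1) * exp (-(r * x)) * (x ^ (-(a/2)) + x ^ a) := by
            exact mul_le_mul_of_nonneg_left hb (by positivity)
        _ = x ^ (a/2 - 1) * exp (-(r * x)) + x ^ (2*a - 1) * exp (-(r * x)) := by
            rw [← e1, ← e2]; ring
    calc r ^ a / Gamma a * x ^ (a-1) * exp (-(r * x)) * x ^ s
        = r ^ a / Gamma a * (x ^ (a-1) * exp (-(r * x)) * x ^ s) := by ring
      _ ≤ r ^ a / Gamma a * (x ^ (a/2 - 1) * exp (-(r * x)) + x ^ (2*a - 1) * exp (-(r * x))) :=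
          mul_le_mul_of_nonneg_left hkey hc.le

lemma integrable_log_gamma {a r : ℝ} (ha : 0 < a) (hr : 0 < r) :
    Integrable Real.log (gammaMeasure a r) := by
  rw [integrable_gamma_iff ha hr]
  have hmaj : IntegrableOn
      (fun x : ℝ => r ^ a / Gamma a * ((2/a) * (x ^ (a/2 - 1) * exp (-(r * x))) + x ^ ((a+1) - 1) * exp (-(r * x)))) (Ioi 0) :=
    ((((integrableOn_rpow_exp (by linarith : (0:ℝ) < a/2) hr).const_mul _).add
      (integrableOn_rpow_exp (by linarith : (0:ℝ) < a+1) hr)).const_mul _)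
  refine hmaj.mono' ?_ ?_
  · exact (((measurable_gammaPDFReal a r).mul Real.measurable_log).aestronglyMeasurable).restrict
  · refine (ae_restrict_iff' measurableSet_Ioi).2 (ae_of_all _ fun x hx => ?_)
    have hx0 : (0:ℝ) < x := hx
    have hpdf : gammaPDFReal a r x = r ^ a / Gamma a * x ^ (a-1) * exp (-(r * x)) := by
      simp [gammaPDFReal, hx0.le]
    have hnn : 0 ≤ gammaPDFReal a r x := gammaPDFReal_nonneg ha hr x
    rw [norm_mul, norm_of_nonneg hnn, hpdf]
    have hb := abs_log_le ha hx0
    have hc : 0 < r ^ a / Gamma a := by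
      have := Real.Gamma_pos_of_pos ha
      positivity
    have e1 : x ^ (a-1) * x ^ (-(a/2)) = x ^ (a/2 - 1) := by
      rw [← Real.rpow_add hx0]; ring_nf
    have e2 : x ^ (a-1) * x = x ^ ((a+1) - 1) := by
      nth_rewrite 2 [← Real.rpow_one x]
      rw [← Real.rpow_add hx0]; ring_nf
    have hkey : x ^ (a-1) * exp (-(r * x)) * ‖Real.log x‖
        ≤ (2/a) * (x ^ (a/2 - 1) * exp (-(r * x))) + x ^ ((a+1) - 1) * exp (-(r * x)) := by
      calc x ^ (a-1) * exp (-(r * x)) * ‖Real.log x‖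
          ≤ x ^ (a-1) * exp (-(r * x)) * ((2/a) * x ^ (-(a/2)) + x) := by
            exact mul_le_mul_of_nonneg_left hb (by positivity)
        _ = (2/a) * (x ^ (a-1) * x ^ (-(a/2)) * exp (-(r * x))) + (x ^ (a-1) * x) * exp (-(r * x)) := by ring
        _ = (2/a) * (x ^ (a/2 - 1) * exp (-(r * x))) + x ^ ((a+1) - 1) * exp (-(r * x)) := by
            rw [e1, e2]
    calc r ^ a / Gamma a * x ^ (a-1) * exp (-(r * x)) * ‖Real.log x‖
        = r ^ a / Gamma a * (x ^ (a-1) * exp (-(r * x)) * ‖Real.log x‖) := by ring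
      _ ≤ r ^ a / Gamma a * ((2/a) * (x ^ (a/2 - 1) * exp (-(r * x))) + x ^ ((a+1) - 1) * exp (-(r * x))) :=
          mul_le_mul_of_nonneg_left hkey hc.le

lemma gamma_moment {a r : ℝ} (ha : 0 < a) (hr : 0 < r) {s : ℝ} (hs : 0 < a + s) :
    ∫ x, x ^ s ∂(gammaMeasure a r) = Gamma (a+s) / (Gamma a * r ^ s) := by
  rw [integral_gamma_eq ha hr]
  have hcong : ∀ x ∈ Ioi (0:ℝ), gammaPDFReal a r x * x ^ s
      = r ^ a / Gamma a * (x ^ ((a+s) - 1) * exp (-(r * x))) := by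
    intro x hx
    have hx0 : (0:ℝ) < x := hx
    have hpdf : gammaPDFReal a r x = r ^ a / Gamma a * x ^ (a-1) * exp (-(r * x)) := by
      simp [gammaPDFReal, hx0.le]
    have e : x ^ (a-1) * x ^ s = x ^ ((a+s) - 1) := by
      rw [← Real.rpow_add hx0]; ring_nf
    rw [hpdf, ← e]; ring
  rw [setIntegral_congr_fun measurableSet_Ioi hcong, integral_const_mul,
    integral_rpow_mul_exp_neg_mul_Ioi hs hr]
  have hΓa : (0:ℝ) < Gamma a := Real.Gamma_pos_of_pos ha
  have hra : (0:ℝ) < r ^ a := Real.rpow_pos_of_pos hr a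
  have hrs : (0:ℝ) < r ^ s := Real.rpow_pos_of_pos hr s
  rw [div_rpow (by norm_num : (0:ℝ) ≤ 1) hr.le, one_rpow, Real.rpow_add hr]
  field_simp


lemma log_Gamma_hasDerivAt {x : ℝ} (hx : 0 < x) :
    HasDerivAt (fun y => Real.log (Gamma y)) (deriv Gamma x / Gamma x) x := by
  have hd : DifferentiableAt ℝ Gamma x := by
    refine Real.differentiableAt_Gamma fun m => ?_
    intro h
    have : (0:ℝ) ≤ (m:ℝ) := Nat.cast_nonneg m
    rw [h] at hx
    linarith
  exact hd.hasDerivAt.log (Real.Gamma_pos_of_pos hx).ne'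

lemma tendsto_slope_logGamma {x ψx : ℝ}
    (h : HasDerivAt (fun y => Real.log (Gamma y)) ψx x) :
    Tendsto (fun s : ℝ => (Real.log (Gamma (x+s)) - Real.log (Gamma x)) / s)
      (𝓝[<] 0) (𝓝 ψx) := by
  have h1 := hasDerivAt_iff_tendsto_slope.1 h
  have h2 : Tendsto (fun s : ℝ => x + s) (𝓝[<] (0:ℝ)) (𝓝[≠] x) := by
    rw [tendsto_nhdsWithin_iff]
    constructor
    · have hmap : Tendsto (fun s : ℝ => x + s) (𝓝 (0:ℝ)) (𝓝 x) := by
        have : Tendsto (fun s : ℝ => x + s) (𝓝 (0:ℝ)) (𝓝 (x + 0)) :=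
          tendsto_const_nhds.add tendsto_id
        simpa using this
      exact hmap.mono_left nhdsWithin_le_nhds
    · filter_upwards [self_mem_nhdsWithin] with s hs
      have : s < 0 := hs
      simp only [mem_compl_iff, mem_singleton_iff]
      intro hcon
      linarith [hcon]
  have h3 := h1.comp h2
  refine h3.congr fun s => ?_
  rw [Function.comp_apply, slope_def_field]
  congr 1
  ring


lemma deriv_logGamma_ge {a : ℝ} (ha : 0 < a) :
    Real.log a - 1/a ≤ deriv Gamma a / Gamma a := by
  have h0 : HasDerivAt (fun y => Real.log (Gamma y)) (deriv Gamma a / Gamma a) a :=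
    log_Gamma_hasDerivAt ha
  have h1 : HasDerivAt (fun y => Real.log (Gamma y))
      (deriv Gamma (a+1) / Gamma (a+1)) (a+1) := log_Gamma_hasDerivAt (by linarith)
  set ψ := deriv Gamma a / Gamma a with hψdef
  set ψ1 := deriv Gamma (a+1) / Gamma (a+1) with hψ1def
  -- recurrence ψ1 = a⁻¹ + ψ
  have hF : HasDerivAt (fun x => Real.log (Gamma (x+1))) ψ1 a := by
    have := h1.comp a ((hasDerivAt_id a).add_const 1)
    rw [mul_one] at this
    exact this
  have hEq : (fun x : ℝ => Real.log x + Real.log (Gamma x))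
      =ᶠ[𝓝 a] (fun x => Real.log (Gamma (x+1))) := by
    filter_upwards [isOpen_Ioi.mem_nhds (show a ∈ Ioi (0:ℝ) from ha)] with x hx
    have hx0 : (0:ℝ) < x := hx
    rw [Real.Gamma_add_one hx0.ne', Real.log_mul hx0.ne' (Real.Gamma_pos_of_pos hx0).ne']
  have hF' : HasDerivAt (fun x : ℝ => Real.log x + Real.log (Gamma x)) ψ1 a :=
    hF.congr_of_eventuallyEq hEq
  have hG : HasDerivAt (fun x : ℝ => Real.log x + Real.log (Gamma x)) (a⁻¹ + ψ) a :=
    (Real.hasDerivAt_log ha.ne').add h0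
  have hrec : ψ1 = a⁻¹ + ψ := hF'.unique hG
  -- slope bound : log a ≤ ψ1
  have htend := tendsto_slope_logGamma h1
  have hlogaa : Real.log (Gamma (a+1)) - Real.log (Gamma a) = Real.log a := by
    rw [Real.Gamma_add_one ha.ne', Real.log_mul ha.ne' (Real.Gamma_pos_of_pos ha).ne']
    ring
  have hev : ∀ᶠ s in 𝓝[<] (0:ℝ),
      Real.log a ≤ (Real.log (Gamma (a+1+s)) - Real.log (Gamma (a+1))) / s := by
    filter_upwards [nhdsWithin_le_nhds (Ioi_mem_nhds (by norm_num : (-1:ℝ) < 0)),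
      self_mem_nhdsWithin] with s hs1 hs2
    have hs1' : (-1:ℝ) < s := hs1
    have hs2' : s < 0 := hs2
    have hsec := Real.convexOn_log_Gamma.secant_mono
      (show a+1 ∈ Ioi (0:ℝ) by simp; linarith)
      (show a ∈ Ioi (0:ℝ) from ha)
      (show a+1+s ∈ Ioi (0:ℝ) by simp; linarith)
      (by intro h; linarith [h])
      (by intro h; linarith [h])
      (by linarith)
    simp only [Function.comp] at hsec
    have e1 : a - (a+1) = (-1:ℝ) := by ring
    have e2 : a+1+s - (a+1) = s := by ring
    rw [e1, e2] at hsec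
    have : (Real.log (Gamma a) - Real.log (Gamma (a+1))) / (-1)
        = Real.log a := by rw [← hlogaa]; ring
    linarith [hsec, this]
  have hψ1 : Real.log a ≤ ψ1 := ge_of_tendsto htend hev
  rw [hrec] at hψ1
  have : 1/a = a⁻¹ := one_div a
  linarith

lemma integral_log_gamma_ge {a r : ℝ} (ha : 0 < a) (hr : 0 < r) :
    Real.log a - 1/a - Real.log r ≤ ∫ x, Real.log x ∂(gammaMeasure a r) := by
  have hprob : IsProbabilityMeasure (gammaMeasure a r) := isProbabilityMeasure_gammaMeasure ha hr
  set μ := gammaMeasure a r with hμ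
  set I := ∫ x, Real.log x ∂μ with hI
  have hψ : HasDerivAt (fun y => Real.log (Gamma y)) (deriv Gamma a / Gamma a) a :=
    log_Gamma_hasDerivAt ha
  have htend := tendsto_slope_logGamma hψ
  have hstep : ∀ s : ℝ, -(a/2) < s → s < 0 →
      (Real.log (Gamma (a+s)) - Real.log (Gamma a)) / s - Real.log r ≤ I := by
    intro s hsa hs0
    have hsa2 : 0 < a + s := by linarith
    have hlog : Integrable Real.log μ := integrable_log_gamma ha hr
    have hf : Integrable (fun x => s * Real.log x) μ := hlog.const_mul s
    have hrpow : Integrable (fun x => x ^ s) μ :=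
      integrable_rpow_gamma ha hr hsa.le (by linarith)
    have hae : ∀ᵐ x ∂μ, Real.exp (s * Real.log x) = x ^ s := by
      filter_upwards [gamma_ae_pos ha hr] with x hx
      rw [Real.rpow_def_of_pos hx, mul_comm]
    have hef : Integrable (fun x => Real.exp (s * Real.log x)) μ :=
      hrpow.congr (hae.mono fun x h => h.symm)
    have hJ := exp_integral_le μ hf hef
    have hIs : ∫ x, s * Real.log x ∂μ = s * I := by
      rw [integral_const_mul]
    have hM : ∫ x, Real.exp (s * Real.log x) ∂μ = Gamma (a+s) / (Gamma a * r ^ s) := by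
      rw [integral_congr_ae hae, gamma_moment ha hr hsa2]
    rw [hIs, hM] at hJ
    have hΓa : (0:ℝ) < Gamma a := Real.Gamma_pos_of_pos ha
    have hΓas : (0:ℝ) < Gamma (a+s) := Real.Gamma_pos_of_pos hsa2
    have hrs : (0:ℝ) < r ^ s := Real.rpow_pos_of_pos hr s
    have hpos : (0:ℝ) < Gamma (a+s) / (Gamma a * r ^ s) := by positivity
    have hlog2 : s * I ≤ Real.log (Gamma (a+s) / (Gamma a * r ^ s)) :=
      (Real.le_log_iff_exp_le hpos).2 hJ
    have hlogval : Real.log (Gamma (a+s) / (Gamma a * r ^ s))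
        = Real.log (Gamma (a+s)) - Real.log (Gamma a) - s * Real.log r := by
      rw [Real.log_div hΓas.ne' (mul_pos hΓa hrs).ne', Real.log_mul hΓa.ne' hrs.ne',
        Real.log_rpow hr]
      ring
    rw [hlogval] at hlog2
    have h7 : (Real.log (Gamma (a+s)) - Real.log (Gamma a) - s * Real.log r) / s ≤ I := by
      rw [div_le_iff_of_neg hs0]
      linarith
    have h8 : (Real.log (Gamma (a+s)) - Real.log (Gamma a) - s * Real.log r) / s
        = (Real.log (Gamma (a+s)) - Real.log (Gamma a)) / s - Real.log r := by
      rw [sub_div, mul_div_cancel_left₀ _ hs0.ne]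
    linarith [h8 ▸ h7]
  have hev : ∀ᶠ s in 𝓝[<] (0:ℝ),
      (Real.log (Gamma (a+s)) - Real.log (Gamma a)) / s - Real.log r ≤ I := by
    filter_upwards [nhdsWithin_le_nhds (Ioi_mem_nhds (by linarith : -(a/2) < (0:ℝ))),
      self_mem_nhdsWithin] with s hs1 hs2
    exact hstep s hs1 hs2
  have hlim := le_of_tendsto (htend.sub_const (Real.log r)) hev
  have hψge := deriv_logGamma_ge ha
  linarith
end Stmt13Aux


open MeasureTheory ProbabilityTheory Real

/-- Let `p ≥ 1`, `α > 0`, and `(X₁, …, X_p)` a random vector of a.s. positive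
random variables (not necessarily independent) whose marginals are `Gamma(α, β_i)` (shape `α`,
scale `β_i`, i.e. rate `1/β_i`), with integrable geometric mean. Then
`E[(∏ X_i)^{1/p}] ≥ α exp(−1/α) (∏ β_i)^{1/p}`. -/
theorem stmt_13 {Ω : Type*} [MeasureSpace Ω] [IsProbabilityMeasure (ℙ : Measure Ω)]
    (p : ℕ) (hp : 1 ≤ p) (α : ℝ) (hα : 0 < α) (β : Fin p → ℝ) (hβ : ∀ i, 0 < β i)
    (X : Fin p → Ω → ℝ) (hX : ∀ i, Measurable (X i))
    (hpos : ∀ᵐ ω ∂ℙ, ∀ i, 0 < X i ω)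
    (hlaw : ∀ i, Measure.map (X i) ℙ = gammaMeasure α (1 / β i))
    (hint : Integrable (fun ω => (∏ i, X i ω) ^ ((1 : ℝ) / p)) ℙ) :
    α * Real.exp (-1 / α) * (∏ i, β i) ^ ((1 : ℝ) / p)
      ≤ ∫ ω, (∏ i, X i ω) ^ ((1 : ℝ) / p) ∂ℙ := by
  classical
  have hp0 : (0:ℝ) < (p:ℝ) := by
    have : 0 < p := lt_of_lt_of_le zero_lt_one hp
    exact_mod_cast this
  have hr : ∀ i, (0:ℝ) < 1 / β i := fun i => one_div_pos.2 (hβ i)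
  have hlogint : ∀ i, Integrable (fun ω => Real.log (X i ω)) ℙ := by
    intro i
    have h1 : Integrable Real.log (Measure.map (X i) ℙ) := by
      rw [hlaw i]
      exact Stmt13Aux.integrable_log_gamma hα (hr i)
    exact (integrable_map_measure Real.measurable_log.aestronglyMeasurable
      (hX i).aemeasurable).1 h1
  have hlogest : ∀ i, Real.log α - 1/α + Real.log (β i) ≤ ∫ ω, Real.log (X i ω) ∂ℙ := by
    intro i
    have h2 : ∫ ω, Real.log (X i ω) ∂ℙ = ∫ x, Real.log x ∂(Measure.map (X i) ℙ) :=
      (integral_map (hX i).aemeasurable Real.measurable_log.aestronglyMeasurable).symm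
    rw [h2, hlaw i]
    have h3 := Stmt13Aux.integral_log_gamma_ge hα (hr i)
    have h4 : Real.log (1 / β i) = - Real.log (β i) := by
      rw [one_div, Real.log_inv]
    rw [h4] at h3
    linarith
  set f : Ω → ℝ := fun ω => (1/(p:ℝ)) * ∑ i, Real.log (X i ω) with hfdef
  have hfint : Integrable f ℙ :=
    (integrable_finset_sum _ (fun i _ => hlogint i)).const_mul _
  have hGM : (fun ω => (∏ i, X i ω) ^ ((1:ℝ)/p)) =ᵐ[ℙ] fun ω => Real.exp (f ω) := by
    filter_upwards [hpos] with ω hω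
    have hprod : 0 < ∏ i, X i ω := Finset.prod_pos fun i _ => hω i
    rw [Real.rpow_def_of_pos hprod, Real.log_prod (fun i _ => (hω i).ne')]
    simp only [hfdef]
    congr 1
    ring
  have hef : Integrable (fun ω => Real.exp (f ω)) ℙ := hint.congr hGM
  have hJ := Stmt13Aux.exp_integral_le ℙ hfint hef
  have hIeq : ∫ ω, (∏ i, X i ω) ^ ((1:ℝ)/p) ∂ℙ = ∫ ω, Real.exp (f ω) ∂ℙ :=
    integral_congr_ae hGM
  have hIf : Real.log α - 1/α + (1/(p:ℝ)) * ∑ i, Real.log (β i) ≤ ∫ ω, f ω ∂ℙ := by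
    have h5 : ∫ ω, f ω ∂ℙ = (1/(p:ℝ)) * ∑ i, ∫ ω, Real.log (X i ω) ∂ℙ := by
      simp only [hfdef]
      rw [integral_const_mul, integral_finset_sum _ (fun i _ => hlogint i)]
    rw [h5]
    have h6 : ∑ i, (Real.log α - 1/α + Real.log (β i)) ≤ ∑ i, ∫ ω, Real.log (X i ω) ∂ℙ :=
      Finset.sum_le_sum fun i _ => hlogest i
    have h7 : ∑ _i : Fin p, (Real.log α - 1/α) = (p:ℝ) * (Real.log α - 1/α) := by
      rw [Finset.sum_const, Finset.card_univ, Fintype.card_fin, nsmul_eq_mul]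
    have h7' : ∑ i : Fin p, (Real.log α - 1/α + Real.log (β i))
        = (p:ℝ) * (Real.log α - 1/α) + ∑ i, Real.log (β i) := by
      rw [Finset.sum_add_distrib, h7]
    rw [h7'] at h6
    have h8 := mul_le_mul_of_nonneg_left h6 (by positivity : (0:ℝ) ≤ 1/(p:ℝ))
    have h9 : (1/(p:ℝ)) * ((p:ℝ) * (Real.log α - 1/α) + ∑ i, Real.log (β i))
        = Real.log α - 1/α + (1/(p:ℝ)) * ∑ i, Real.log (β i) := by
      field_simp
    rw [h9] at h8
    linarith
  have hprodβ : 0 < ∏ i, β i := Finset.prod_pos fun i _ => hβ i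
  have hlhs : α * Real.exp (-1/α) * (∏ i, β i) ^ ((1:ℝ)/p)
      = Real.exp (Real.log α - 1/α + (1/(p:ℝ)) * ∑ i, Real.log (β i)) := by
    rw [Real.rpow_def_of_pos hprodβ, Real.log_prod (fun i _ => (hβ i).ne')]
    rw [show Real.log α - 1/α + (1/(p:ℝ)) * ∑ i, Real.log (β i)
        = Real.log α + (-1/α) + (∑ i, Real.log (β i)) * (1/(p:ℝ)) by ring]
    rw [Real.exp_add, Real.exp_add, Real.exp_log hα]
  calc α * Real.exp (-1 / α) * (∏ i, β i) ^ ((1 : ℝ) / p)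
      = Real.exp (Real.log α - 1/α + (1/(p:ℝ)) * ∑ i, Real.log (β i)) := hlhs
    _ ≤ Real.exp (∫ ω, f ω ∂ℙ) := Real.exp_le_exp.2 hIf
    _ ≤ ∫ ω, Real.exp (f ω) ∂ℙ := hJ
    _ = ∫ ω, (∏ i, X i ω) ^ ((1 : ℝ) / p) ∂ℙ := hIeq.symm
end
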